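/- Extending scope of existential quantifier over disjunction (rule 4): ∃x(φ ∨ ψ) is logically equivalent to (∃x φ) ∨ ψ, provided x does not occur free in ψ. -/

import Mathlib

open FirstOrder Language

/-- Formulas of independence logic over a first-order language `L`, with variables `ℕ`:
first-order formulas, conditional independence atoms `t1 ⊥_{t3} t2` (written
`indep t1 t2 t3`) between tuples (lists) of terms, conjunction, disjunction, and
existential and universal quantification. -/
inductive TeamFormula (L : Language) : Type _ where
  | fo (φ : L.Formula ℕ)
  | indep (t1 t2 t3 : List (L.Term ℕ))
  | and (φ ψ : TeamFormula L)
  | or (φ ψ : TeamFormula L)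
  | ex (x : ℕ) (φ : TeamFormula L)
  | all (x : ℕ) (φ : TeamFormula L)

namespace TeamFormula

variable {L : Language}

/-- The set of free variables of an independence-logic formula. -/
def Fr : TeamFormula L → Set ℕ
  | .fo φ => ↑φ.freeVarFinset
  | .indep t1 t2 t3 => ↑((t1 ++ t2 ++ t3).foldr (fun t s => t.varFinset ∪ s) ∅)
  | .and φ ψ => φ.Fr ∪ ψ.Fr
  | .or φ ψ => φ.Fr ∪ ψ.Fr
  | .ex x φ => φ.Fr \ {x}
  | .all x φ => φ.Fr \ {x}

/-- A team is a set of assignments. -/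
abbrev Team (M : Type*) := Set (ℕ → M)

/-- The value of a tuple (list) of terms under an assignment. -/
def listVal {M : Type*} [L.Structure M] (ts : List (L.Term ℕ)) (s : ℕ → M) : List M :=
  ts.map fun t => t.realize s

/-- Lax team semantics for independence logic.  First-order formulas are evaluated
pointwise; disjunction splits the team into a union; `∃x φ` is witnessed by a function
`F` from the team to nonempty sets of elements, extending the team to
`X(F/x) = {s(a/x) : s ∈ X, a ∈ F s}`; `∀x φ` duplicates the team to `X(M/x)`. -/
def Sat (M : Type*) [L.Structure M] : TeamFormula L → Team M → Prop
  | .fo φ, X => ∀ s ∈ X, φ.Realize s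
  | .indep t1 t2 t3, X => ∀ s ∈ X, ∀ s' ∈ X, listVal t3 s = listVal t3 s' →
      ∃ s'' ∈ X, listVal t1 s'' = listVal t1 s ∧ listVal t3 s'' = listVal t3 s ∧
        listVal t2 s'' = listVal t2 s'
  | .and φ ψ, X => φ.Sat M X ∧ ψ.Sat M X
  | .or φ ψ, X => ∃ Y Z : Team M, Y ∪ Z = X ∧ φ.Sat M Y ∧ ψ.Sat M Z
  | .ex x φ, X => ∃ F : (ℕ → M) → Set M, (∀ s ∈ X, (F s).Nonempty) ∧
      φ.Sat M {s' | ∃ s ∈ X, ∃ a ∈ F s, s' = Function.update s x a}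
  | .all x φ, X => φ.Sat M {s' | ∃ s ∈ X, ∃ a : M, s' = Function.update s x a}

variable {M : Type*} [L.Structure M]

/-- The extension `X(F/x)` of a team. -/
def extT (X : Team M) (F : (ℕ → M) → Set M) (x : ℕ) : Team M :=
  {s' | ∃ s ∈ X, ∃ a ∈ F s, s' = Function.update s x a}

lemma sat_ex_iff {φ : TeamFormula L} {x : ℕ} {X : Team M} :
    (TeamFormula.ex x φ).Sat M X ↔
      ∃ F : (ℕ → M) → Set M, (∀ s ∈ X, (F s).Nonempty) ∧ φ.Sat M (extT X F x) :=
  Iff.rfl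

lemma sat_all_iff {φ : TeamFormula L} {x : ℕ} {X : Team M} :
    (TeamFormula.all x φ).Sat M X ↔ φ.Sat M (extT X (fun _ => Set.univ) x) := by
  show φ.Sat M _ ↔ φ.Sat M _
  congr! 1
  ext s'
  simp [extT]

lemma term_congr {t : L.Term ℕ} {v v' : ℕ → M}
    (h : ∀ y ∈ t.varFinset, v y = v' y) : t.realize v = t.realize v' := by
  have h1 := Term.realize_restrictVar' (M := M) (t := t) (s := (↑t.varFinset : Set ℕ))
    subset_rfl (v := v)
  have h2 := Term.realize_restrictVar' (M := M) (t := t) (s := (↑t.varFinset : Set ℕ))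
    subset_rfl (v := v')
  rw [← h1, ← h2]
  congr 1
  funext y
  exact h y y.2

lemma formula_congr {φ : L.Formula ℕ} {v v' : ℕ → M}
    (h : ∀ y ∈ φ.freeVarFinset, v y = v' y) : φ.Realize v ↔ φ.Realize v' := by
  have h1 := BoundedFormula.realize_restrictFreeVar' (M := M) (φ := φ)
    (s := (↑φ.freeVarFinset : Set ℕ)) subset_rfl (v := v) (xs := default)
  have h2 := BoundedFormula.realize_restrictFreeVar' (M := M) (φ := φ)
    (s := (↑φ.freeVarFinset : Set ℕ)) subset_rfl (v := v') (xs := default)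
  have hvv : v ∘ (Subtype.val : (↑φ.freeVarFinset : Set ℕ) → ℕ) = v' ∘ Subtype.val := by
    funext y; exact h y y.2
  unfold Formula.Realize
  rw [← h1, ← h2, hvv]

lemma mem_foldr_varFinset {l : List (L.Term ℕ)} {y : ℕ} :
    y ∈ l.foldr (fun t (s : Set ℕ) => ↑t.varFinset ∪ s) ∅ ↔ ∃ t ∈ l, y ∈ t.varFinset := by
  induction l with
  | nil => simp
  | cons t l ih => simp [ih]

lemma listVal_update {ts : List (L.Term ℕ)} {x : ℕ} {s : ℕ → M} {a : M}
    (h : ∀ t ∈ ts, x ∉ t.varFinset) :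
    listVal ts (Function.update s x a) = listVal ts s := by
  unfold listVal
  refine List.map_congr_left fun t ht => ?_
  refine term_congr fun y hy => ?_
  have : y ≠ x := fun hxy => h t ht (hxy ▸ hy)
  simp [Function.update_of_ne this]

/-- Key lemma: satisfaction is invariant under extension at a variable not free in `φ`. -/
lemma sat_extT_iff (φ : TeamFormula L) (x : ℕ) (hx : x ∉ φ.Fr) :
    ∀ (X : Team M) (F : (ℕ → M) → Set M), (∀ s ∈ X, (F s).Nonempty) →
      (φ.Sat M X ↔ φ.Sat M (extT X F x)) := by
  induction φ with
  | fo φ =>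
    intro X F hF
    have hreal : ∀ (s : ℕ → M) (a : M), φ.Realize (Function.update s x a) ↔ φ.Realize s := by
      intro s a
      refine formula_congr fun y hy => ?_
      have : y ≠ x := fun hxy => hx (by simpa [Fr] using hxy ▸ hy)
      simp [Function.update_of_ne this]
    constructor
    · rintro h s' ⟨s, hs, a, _, rfl⟩
      exact (hreal s a).2 (h s hs)
    · intro h s hs
      obtain ⟨a, ha⟩ := hF s hs
      exact (hreal s a).1 (h _ ⟨s, hs, a, ha, rfl⟩)
  | indep t1 t2 t3 =>
    intro X F hF
    have hvar : ∀ t ∈ t1 ++ t2 ++ t3, x ∉ t.varFinset := by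
      intro t ht htx
      exact hx (show x ∈ Fr (indep t1 t2 t3) from mem_foldr_varFinset.2 ⟨t, ht, htx⟩)
    have h1 : ∀ (s : ℕ → M) (a : M),
        listVal t1 (Function.update s x a) = listVal t1 s :=
      fun s a => listVal_update (fun t ht => hvar t (by simp [ht]))
    have h2 : ∀ (s : ℕ → M) (a : M),
        listVal t2 (Function.update s x a) = listVal t2 s :=
      fun s a => listVal_update (fun t ht => hvar t (by simp [ht]))
    have h3 : ∀ (s : ℕ → M) (a : M),
        listVal t3 (Function.update s x a) = listVal t3 s :=
      fun s a => listVal_update (fun t ht => hvar t (by simp [ht]))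
    constructor
    · rintro h u ⟨s, hs, a, ha, rfl⟩ u' ⟨s', hs', a', ha', rfl⟩ heq
      rw [h3, h3] at heq
      obtain ⟨s'', hs'', e1, e3, e2⟩ := h s hs s' hs' heq
      obtain ⟨b, hb⟩ := hF s'' hs''
      exact ⟨Function.update s'' x b, ⟨s'', hs'', b, hb, rfl⟩,
        by rw [h1, h1, e1], by rw [h3, h3, e3], by rw [h2, h2, e2]⟩
    · intro h s hs s' hs' heq
      obtain ⟨a, ha⟩ := hF s hs
      obtain ⟨a', ha'⟩ := hF s' hs'
      obtain ⟨u'', ⟨s'', hs'', b, hb, rfl⟩, e1, e3, e2⟩ :=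
        h (Function.update s x a) ⟨s, hs, a, ha, rfl⟩
          (Function.update s' x a') ⟨s', hs', a', ha', rfl⟩ (by rw [h3, h3, heq])
      rw [h1, h1] at e1; rw [h3, h3] at e3; rw [h2, h2] at e2
      exact ⟨s'', hs'', e1, e3, e2⟩
  | and φ ψ ihφ ihψ =>
    intro X F hF
    have hxφ : x ∉ φ.Fr := fun h => hx (Or.inl h)
    have hxψ : x ∉ ψ.Fr := fun h => hx (Or.inr h)
    exact and_congr (ihφ hxφ X F hF) (ihψ hxψ X F hF)
  | or φ ψ ihφ ihψ =>
    intro X F hF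
    have hxφ : x ∉ φ.Fr := fun h => hx (Or.inl h)
    have hxψ : x ∉ ψ.Fr := fun h => hx (Or.inr h)
    constructor
    · rintro ⟨Y, Z, rfl, hY, hZ⟩
      refine ⟨extT Y F x, extT Z F x, ?_, ?_, ?_⟩
      · ext u
        constructor
        · rintro (⟨s, hs, a, ha, rfl⟩ | ⟨s, hs, a, ha, rfl⟩)
          · exact ⟨s, Or.inl hs, a, ha, rfl⟩
          · exact ⟨s, Or.inr hs, a, ha, rfl⟩
        · rintro ⟨s, hs | hs, a, ha, rfl⟩
          · exact Or.inl ⟨s, hs, a, ha, rfl⟩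
          · exact Or.inr ⟨s, hs, a, ha, rfl⟩
      · exact (ihφ hxφ Y F (fun s hs => hF s (Or.inl hs))).1 hY
      · exact (ihψ hxψ Z F (fun s hs => hF s (Or.inr hs))).1 hZ
    · rintro ⟨Y', Z', hYZ, hY, hZ⟩
      have hYe : extT {s ∈ X | ∃ a ∈ F s, Function.update s x a ∈ Y'}
          (fun s => {a ∈ F s | Function.update s x a ∈ Y'}) x = Y' := by
        ext u
        constructor
        · rintro ⟨s, hs, a, ⟨ha, hu⟩, rfl⟩
          exact hu
        · intro hu
          have : u ∈ extT X F x := hYZ ▸ Or.inl hu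
          obtain ⟨s, hs, a, ha, rfl⟩ := this
          exact ⟨s, ⟨hs, a, ha, hu⟩, a, ⟨ha, hu⟩, rfl⟩
      have hZe : extT {s ∈ X | ∃ a ∈ F s, Function.update s x a ∈ Z'}
          (fun s => {a ∈ F s | Function.update s x a ∈ Z'}) x = Z' := by
        ext u
        constructor
        · rintro ⟨s, hs, a, ⟨ha, hu⟩, rfl⟩
          exact hu
        · intro hu
          have : u ∈ extT X F x := hYZ ▸ Or.inr hu
          obtain ⟨s, hs, a, ha, rfl⟩ := this
          exact ⟨s, ⟨hs, a, ha, hu⟩, a, ⟨ha, hu⟩, rfl⟩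
      rw [← hYe] at hY
      rw [← hZe] at hZ
      refine ⟨{s ∈ X | ∃ a ∈ F s, Function.update s x a ∈ Y'},
        {s ∈ X | ∃ a ∈ F s, Function.update s x a ∈ Z'}, ?_, ?_, ?_⟩
      · ext s
        constructor
        · rintro (⟨hs, _⟩ | ⟨hs, _⟩) <;> exact hs
        · intro hs
          obtain ⟨a, ha⟩ := hF s hs
          have : Function.update s x a ∈ Y' ∪ Z' := hYZ ▸ ⟨s, hs, a, ha, rfl⟩
          rcases this with h | h
          · exact Or.inl ⟨hs, a, ha, h⟩
          · exact Or.inr ⟨hs, a, ha, h⟩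
      · exact (ihφ hxφ _ _ (fun s hs => by obtain ⟨a, ha, hu⟩ := hs.2; exact ⟨a, ha, hu⟩)).2 hY
      · exact (ihψ hxψ _ _ (fun s hs => by obtain ⟨a, ha, hu⟩ := hs.2; exact ⟨a, ha, hu⟩)).2 hZ
  | ex y φ ihφ =>
    intro X F hF
    by_cases hxy : x = y
    · subst hxy
      rw [sat_ex_iff, sat_ex_iff]
      constructor
      · rintro ⟨H, hH, hsat⟩
        refine ⟨fun u => {b | ∃ s ∈ X, ∃ a ∈ F s, u = Function.update s x a ∧ b ∈ H s},
          ?_, ?_⟩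
        · rintro u ⟨s, hs, a, ha, rfl⟩
          obtain ⟨b, hb⟩ := hH s hs
          exact ⟨b, s, hs, a, ha, rfl, hb⟩
        · have hkey : extT (extT X F x) (fun u => {b | ∃ s ∈ X, ∃ a ∈ F s,
              u = Function.update s x a ∧ b ∈ H s}) x = extT X H x := by
            ext u
            constructor
            · rintro ⟨_, ⟨s, hs, a, ha, rfl⟩, b, ⟨s', hs', a', ha', heq, hb⟩, rfl⟩
              refine ⟨s', hs', b, hb, ?_⟩
              rw [heq, Function.update_idem]
            · rintro ⟨s, hs, b, hb, rfl⟩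
              obtain ⟨a, ha⟩ := hF s hs
              exact ⟨Function.update s x a, ⟨s, hs, a, ha, rfl⟩, b,
                ⟨s, hs, a, ha, rfl, hb⟩, by rw [Function.update_idem]⟩
          rw [hkey]
          exact hsat
      · rintro ⟨G, hG, hsat⟩
        refine ⟨fun s => {b | ∃ a ∈ F s, b ∈ G (Function.update s x a)}, ?_, ?_⟩
        · intro s hs
          obtain ⟨a, ha⟩ := hF s hs
          obtain ⟨b, hb⟩ := hG _ ⟨s, hs, a, ha, rfl⟩
          exact ⟨b, a, ha, hb⟩
        · have hkey : extT X (fun s => {b | ∃ a ∈ F s, b ∈ G (Function.update s x a)}) x =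
              extT (extT X F x) G x := by
            ext u
            constructor
            · rintro ⟨s, hs, b, ⟨a, ha, hb⟩, rfl⟩
              exact ⟨Function.update s x a, ⟨s, hs, a, ha, rfl⟩, b, hb,
                by rw [Function.update_idem]⟩
            · rintro ⟨_, ⟨s, hs, a, ha, rfl⟩, b, hb, rfl⟩
              exact ⟨s, hs, b, ⟨a, ha, hb⟩, by rw [Function.update_idem]⟩
          rw [hkey]
          exact hsat
    · have hxφ : x ∉ φ.Fr := fun h => hx ⟨h, hxy⟩
      rw [sat_ex_iff, sat_ex_iff]
      constructor
      · rintro ⟨H, hH, hsat⟩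
        refine ⟨fun u => {b | ∃ s ∈ X, ∃ a ∈ F s, u = Function.update s x a ∧ b ∈ H s},
          ?_, ?_⟩
        · rintro u ⟨s, hs, a, ha, rfl⟩
          obtain ⟨b, hb⟩ := hH s hs
          exact ⟨b, s, hs, a, ha, rfl, hb⟩
        · have hkey : extT (extT X F x) (fun u => {b | ∃ s ∈ X, ∃ a ∈ F s,
              u = Function.update s x a ∧ b ∈ H s}) y =
              extT (extT X H y)
                (fun v => {a | ∃ s ∈ X, ∃ b ∈ H s, v = Function.update s y b ∧ a ∈ F s}) x := by
            ext u
            constructor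
            · rintro ⟨_, ⟨s, hs, a, ha, rfl⟩, b, ⟨s', hs', a', ha', heq, hb⟩, rfl⟩
              refine ⟨Function.update s' y b, ⟨s', hs', b, hb, rfl⟩, a',
                ⟨s', hs', b, hb, rfl, ha'⟩, ?_⟩
              rw [heq, Function.update_comm hxy]
            · rintro ⟨_, ⟨s, hs, b, hb, rfl⟩, a, ⟨s', hs', b', hb', heq, ha⟩, rfl⟩
              refine ⟨Function.update s' x a, ⟨s', hs', a, ha, rfl⟩, b',
                ⟨s', hs', a, ha, rfl, hb'⟩, ?_⟩
              rw [heq, Function.update_comm hxy]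
          rw [hkey]
          refine (ihφ hxφ (extT X H y) _ ?_).1 hsat
          rintro v ⟨s, hs, b, hb, rfl⟩
          obtain ⟨a, ha⟩ := hF s hs
          exact ⟨a, s, hs, b, hb, rfl, ha⟩
      · rintro ⟨G, hG, hsat⟩
        refine ⟨fun s => {b | ∃ a ∈ F s, b ∈ G (Function.update s x a)}, ?_, ?_⟩
        · intro s hs
          obtain ⟨a, ha⟩ := hF s hs
          obtain ⟨b, hb⟩ := hG _ ⟨s, hs, a, ha, rfl⟩
          exact ⟨b, a, ha, hb⟩
        · have hkey : extT (extT X F x) G y =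
              extT (extT X (fun s => {b | ∃ a ∈ F s, b ∈ G (Function.update s x a)}) y)
                (fun v => {a | ∃ s ∈ X, ∃ b, v = Function.update s y b ∧ a ∈ F s ∧
                  b ∈ G (Function.update s x a)}) x := by
            ext u
            constructor
            · rintro ⟨_, ⟨s, hs, a, ha, rfl⟩, b, hb, rfl⟩
              refine ⟨Function.update s y b, ⟨s, hs, b, ⟨a, ha, hb⟩, rfl⟩, a,
                ⟨s, hs, b, rfl, ha, hb⟩, ?_⟩
              rw [Function.update_comm hxy]
            · rintro ⟨_, ⟨s, hs, b, ⟨a₀, ha₀, hb₀⟩, rfl⟩, a, ⟨s', hs', b', heq, ha, hb⟩, rfl⟩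
              refine ⟨Function.update s' x a, ⟨s', hs', a, ha, rfl⟩, b', hb, ?_⟩
              rw [heq, Function.update_comm hxy]
          rw [hkey] at hsat
          refine (ihφ hxφ _ _ ?_).2 hsat
          rintro v ⟨s, hs, b, ⟨a, ha, hb⟩, rfl⟩
          exact ⟨a, s, hs, b, rfl, ha, hb⟩
  | all y φ ihφ =>
    intro X F hF
    rw [sat_all_iff, sat_all_iff]
    by_cases hxy : x = y
    · subst hxy
      have : extT (extT X F x) (fun _ => Set.univ) x = extT X (fun _ => Set.univ) x := by
        ext u
        constructor
        · rintro ⟨_, ⟨s, hs, a, ha, rfl⟩, b, -, rfl⟩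
          exact ⟨s, hs, b, trivial, by rw [Function.update_idem]⟩
        · rintro ⟨s, hs, b, -, rfl⟩
          obtain ⟨a, ha⟩ := hF s hs
          exact ⟨Function.update s x a, ⟨s, hs, a, ha, rfl⟩, b, trivial,
            by rw [Function.update_idem]⟩
      rw [this]
    · have hxφ : x ∉ φ.Fr := fun h => hx ⟨h, hxy⟩
      have hkey : extT (extT X F x) (fun _ => Set.univ) y =
          extT (extT X (fun _ => Set.univ) y)
            (fun v => {a | ∃ s ∈ X, ∃ b : M, v = Function.update s y b ∧ a ∈ F s}) x := by
        ext u
        constructor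
        · rintro ⟨_, ⟨s, hs, a, ha, rfl⟩, b, -, rfl⟩
          exact ⟨Function.update s y b, ⟨s, hs, b, trivial, rfl⟩, a, ⟨s, hs, b, rfl, ha⟩,
            by rw [Function.update_comm hxy]⟩
        · rintro ⟨_, ⟨s, hs, b, -, rfl⟩, a, ⟨s', hs', b', heq, ha⟩, rfl⟩
          refine ⟨Function.update s' x a, ⟨s', hs', a, ha, rfl⟩, b', trivial, ?_⟩
          rw [heq, Function.update_comm hxy]
      rw [hkey]
      refine ihφ hxφ _ _ ?_
      rintro v ⟨s, hs, b, -, rfl⟩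
      obtain ⟨a, ha⟩ := hF s hs
      exact ⟨a, s, hs, b, rfl, ha⟩


end TeamFormula

/-- extending the scope of an existential quantifier over a disjunction
(rule 4): `∃x(φ ∨ ψ)` is logically equivalent to `(∃x φ) ∨ ψ`, provided `x` is not free
in `ψ`. -/
theorem TeamFormula.extend_scope_exists_or {L : FirstOrder.Language} {M : Type*}
    [L.Structure M] (φ ψ : TeamFormula L) (x : ℕ) (hx : x ∉ ψ.Fr) :
    ∀ X : TeamFormula.Team M,
      (TeamFormula.ex x (φ.or ψ)).Sat M X ↔ ((TeamFormula.ex x φ).or ψ).Sat M X := by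
  intro X
  constructor
  · rintro ⟨F, hF, Y', Z', hYZ, hφ, hψ⟩
    have hYZ : Y' ∪ Z' = extT X F x := hYZ
    have hYe : extT {s ∈ X | ∃ a ∈ F s, Function.update s x a ∈ Y'}
        (fun s => {a ∈ F s | Function.update s x a ∈ Y'}) x = Y' := by
      ext u
      constructor
      · rintro ⟨s, hs, a, ⟨ha, hu⟩, rfl⟩
        exact hu
      · intro hu
        have : u ∈ extT X F x := hYZ ▸ Or.inl hu
        obtain ⟨s, hs, a, ha, rfl⟩ := this
        exact ⟨s, ⟨hs, a, ha, hu⟩, a, ⟨ha, hu⟩, rfl⟩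
    have hZe : extT {s ∈ X | ∃ a ∈ F s, Function.update s x a ∈ Z'}
        (fun s => {a ∈ F s | Function.update s x a ∈ Z'}) x = Z' := by
      ext u
      constructor
      · rintro ⟨s, hs, a, ⟨ha, hu⟩, rfl⟩
        exact hu
      · intro hu
        have : u ∈ extT X F x := hYZ ▸ Or.inr hu
        obtain ⟨s, hs, a, ha, rfl⟩ := this
        exact ⟨s, ⟨hs, a, ha, hu⟩, a, ⟨ha, hu⟩, rfl⟩
    refine ⟨{s ∈ X | ∃ a ∈ F s, Function.update s x a ∈ Y'},
      {s ∈ X | ∃ a ∈ F s, Function.update s x a ∈ Z'}, ?_, ?_, ?_⟩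
    · ext s
      constructor
      · rintro (⟨hs, _⟩ | ⟨hs, _⟩) <;> exact hs
      · intro hs
        obtain ⟨a, ha⟩ := hF s hs
        have : Function.update s x a ∈ Y' ∪ Z' := hYZ ▸ ⟨s, hs, a, ha, rfl⟩
        rcases this with h | h
        · exact Or.inl ⟨hs, a, ha, h⟩
        · exact Or.inr ⟨hs, a, ha, h⟩
    · refine ⟨fun s => {a ∈ F s | Function.update s x a ∈ Y'}, ?_, ?_⟩
      · rintro s ⟨hs, a, ha, hu⟩
        exact ⟨a, ha, hu⟩
      · show φ.Sat M (extT _ _ x)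
        rw [hYe]
        exact hφ
    · refine (sat_extT_iff ψ x hx _ (fun s => {a ∈ F s | Function.update s x a ∈ Z'})
        ?_).2 ?_
      · rintro s ⟨hs, a, ha, hu⟩
        exact ⟨a, ha, hu⟩
      · rw [hZe]
        exact hψ
  · rintro ⟨Y, Z, rfl, ⟨F, hF, hφ⟩, hψ⟩
    refine ⟨fun s => {a | s ∈ Y ∧ a ∈ F s} ∪ {a | s ∈ Z ∧ a = s x}, ?_, ?_⟩
    · rintro s (hs | hs)
      · obtain ⟨a, ha⟩ := hF s hs
        exact ⟨a, Or.inl ⟨hs, ha⟩⟩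
      · exact ⟨s x, Or.inr ⟨hs, rfl⟩⟩
    · refine ⟨extT Y F x, Z, ?_, hφ, hψ⟩
      ext u
      constructor
      · rintro (⟨s, hs, a, ha, rfl⟩ | hu)
        · exact ⟨s, Or.inl hs, a, Or.inl ⟨hs, ha⟩, rfl⟩
        · exact ⟨u, Or.inr hu, u x, Or.inr ⟨hu, rfl⟩, (Function.update_eq_self x u).symm⟩
      · rintro ⟨s, hs, a, (⟨hsY, ha⟩ | ⟨hsZ, rfl⟩), rfl⟩
        · exact Or.inl ⟨s, hsY, a, ha, rfl⟩
        · rw [Function.update_eq_self]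
          exact Or.inr hsZ
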